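/- arXiv:2406.12857 — 2 statements merged into one kernel-verified Lean document; each statement's English description precedes it below -/
import Mathlib

section
/- Let K and K̃ be symmetric n×n matrices with nonnegative real entries such that R_e[K](η) = R_e[K̃](η) for all η ∈ ℝ₊ⁿ. Then K̃ = K. -/
open Matrix

/-- Spectral radius of a real square matrix: the maximum of the moduli of its
complex eigenvalues. -/
noncomputable def specRad {ι : Type*} [Fintype ι] [DecidableEq ι]
    (M : Matrix ι ι ℝ) : ℝ :=
  sSup ((fun z : ℂ => ‖z‖) '' spectrum ℂ (M.map (Complex.ofReal : ℝ → ℂ)))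

/-- Effective spectrum: spectrum of `K ⬝ Diag η` over `ℂ`. -/
noncomputable def espec {ι : Type*} [Fintype ι] [DecidableEq ι]
    (K : Matrix ι ι ℝ) (η : ι → ℝ) : Set ℂ :=
  spectrum ℂ ((K * Matrix.diagonal η).map (Complex.ofReal : ℝ → ℂ))

/-- Effective spectral radius: spectral radius of `K ⬝ Diag η`. -/
noncomputable def eRad {ι : Type*} [Fintype ι] [DecidableEq ι]
    (K : Matrix ι ι ℝ) (η : ι → ℝ) : ℝ :=
  specRad (K * Matrix.diagonal η)

/-- Principal minor of `K` associated to the set of indices `α`. -/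
def pminor {n : ℕ} (K : Matrix (Fin n) (Fin n) ℝ) (α : Finset (Fin n)) : ℝ :=
  (K.submatrix (fun i : α => (i : Fin n)) (fun j : α => (j : Fin n))).det

/-- Membership in the spectrum of a complex matrix via the determinant. -/
lemma mem_spectrum_iff_det {m : Type*} [Fintype m] [DecidableEq m]
    (A : Matrix m m ℂ) (μ : ℂ) :
    μ ∈ spectrum ℂ A ↔ (μ • (1 : Matrix m m ℂ) - A).det = 0 := by
  rw [spectrum.mem_iff, Matrix.isUnit_iff_isUnit_det, isUnit_iff_ne_zero, not_not,
    Algebra.algebraMap_eq_smul_one]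

/-- Sups of two finite nonempty sets of nonnegative reals which agree after adding `0`. -/
lemma sSup_eq_of_union_zero {S T : Set ℝ} (hS : S.Finite) (hT : T.Finite)
    (hSne : S.Nonempty) (hTne : T.Nonempty)
    (hSpos : ∀ x ∈ S, 0 ≤ x) (hTpos : ∀ x ∈ T, 0 ≤ x)
    (h : S ∪ {0} = T ∪ {0}) : sSup S = sSup T := by
  have hSb : BddAbove S := hS.bddAbove
  have hTb : BddAbove T := hT.bddAbove
  have hSup : (0 : ℝ) ≤ sSup S := le_trans (hSpos _ hSne.choose_spec)
    (le_csSup hSb hSne.choose_spec)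
  have hTup : (0 : ℝ) ≤ sSup T := le_trans (hTpos _ hTne.choose_spec)
    (le_csSup hTb hTne.choose_spec)
  have h1 : sSup (S ∪ {0}) = sSup S := by
    rw [csSup_union hSb hSne (bddAbove_singleton) (Set.singleton_nonempty 0),
      csSup_singleton, sup_eq_left.mpr hSup]
  have h2 : sSup (T ∪ {0}) = sSup T := by
    rw [csSup_union hTb hTne (bddAbove_singleton) (Set.singleton_nonempty 0),
      csSup_singleton, sup_eq_left.mpr hTup]
  rw [← h1, ← h2, h]

/-- The key reduction: the effective spectral radius for a 0/1 indicator weight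
equals the spectral radius of the corresponding principal submatrix. -/
lemma eRad_indicator {n k : ℕ} (K : Matrix (Fin n) (Fin n) ℝ)
    (e : Fin k → Fin n) (he : Function.Injective e) (hk : 0 < k) :
    eRad K (fun a => if a ∈ Finset.image e Finset.univ then 1 else 0)
      = specRad (K.submatrix e e) := by
  classical
  set η : Fin n → ℝ := fun a => if a ∈ Finset.image e Finset.univ then 1 else 0 with hη
  set A : Matrix (Fin n) (Fin n) ℂ :=
    (K * Matrix.diagonal η).map (Complex.ofReal : ℝ → ℂ) with hAdef
  set B : Matrix (Fin k) (Fin k) ℂ :=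
    (K.submatrix e e).map (Complex.ofReal : ℝ → ℂ) with hBdef
  set U : Matrix (Fin n) (Fin k) ℂ := fun a t => (K a (e t) : ℂ) with hU
  set V : Matrix (Fin k) (Fin n) ℂ := fun t b => if e t = b then 1 else 0 with hV
  have hA : A = U * V := by
    ext a b
    rw [hAdef, Matrix.map_apply, Matrix.mul_diagonal, Matrix.mul_apply]
    by_cases hb : b ∈ Finset.image e Finset.univ
    · obtain ⟨t0, -, ht0⟩ := Finset.mem_image.mp hb
      have : ∀ t : Fin k, t ∈ Finset.univ → t ≠ t0 → U a t * V t b = 0 := by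
        intro t _ ht
        have : e t ≠ b := fun hc => ht (he (hc.trans ht0.symm))
        simp [hU, hV, this]
      rw [Finset.sum_eq_single t0 this (by simp)]
      have hval : η b = 1 := by rw [hη]; simp only [hb, if_true]
      simp [hU, hV, ht0, hval]
    · have : ∀ t : Fin k, t ∈ Finset.univ → U a t * V t b = 0 := by
        intro t _
        have : e t ≠ b := by
          intro hc
          exact hb (Finset.mem_image.mpr ⟨t, Finset.mem_univ t, hc⟩)
        simp [hU, hV, this]
      rw [Finset.sum_eq_zero this]
      have hval : η b = 0 := by rw [hη]; simp only [hb, if_false]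
      simp [hval]
  have hB : B = V * U := by
    ext t s
    rw [hBdef, Matrix.map_apply, Matrix.mul_apply]
    have : ∀ a : Fin n, a ∈ Finset.univ → a ≠ e t → V t a * U a s = 0 := by
      intro a _ ha
      simp [hV, hU, Ne.symm ha]
    rw [Finset.sum_eq_single (e t) this (by simp)]
    simp [hV, hU, Matrix.submatrix_apply]
  -- determinant identity away from 0
  have hdet : ∀ μ : ℂ, μ ≠ 0 →
      ((μ • (1 : Matrix (Fin n) (Fin n) ℂ) - A).det = 0 ↔
        (μ • (1 : Matrix (Fin k) (Fin k) ℂ) - B).det = 0) := by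
    intro μ hμ
    have h1 : μ • (1 : Matrix (Fin n) (Fin n) ℂ) - A
        = μ • ((1 : Matrix (Fin n) (Fin n) ℂ) - (μ⁻¹ • U) * V) := by
      rw [hA, Matrix.smul_mul, smul_sub, smul_smul, mul_inv_cancel₀ hμ, one_smul]
    have h2 : (1 : Matrix (Fin k) (Fin k) ℂ) - V * (μ⁻¹ • U)
        = μ⁻¹ • (μ • (1 : Matrix (Fin k) (Fin k) ℂ) - B) := by
      rw [hB, Matrix.mul_smul, smul_sub, smul_smul, inv_mul_cancel₀ hμ, one_smul]
    have := Matrix.det_one_sub_mul_comm (μ⁻¹ • U) V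
    rw [h2] at this
    have hcalc : (μ • (1 : Matrix (Fin n) (Fin n) ℂ) - A).det
        = μ ^ n * ((μ⁻¹) ^ k * (μ • (1 : Matrix (Fin k) (Fin k) ℂ) - B).det) := by
      rw [h1, Matrix.det_smul, this, Matrix.det_smul]
      simp [Fintype.card_fin]
    rw [hcalc]
    constructor
    · intro hz
      rcases mul_eq_zero.mp hz with hz' | hz'
      · exact absurd hz' (pow_ne_zero _ hμ)
      · rcases mul_eq_zero.mp hz' with hz'' | hz''
        · exact absurd hz'' (pow_ne_zero _ (inv_ne_zero hμ))
        · exact hz''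
    · intro hz
      rw [hz, mul_zero, mul_zero]
  have hspec : ∀ μ : ℂ, μ ≠ 0 → (μ ∈ spectrum ℂ A ↔ μ ∈ spectrum ℂ B) := by
    intro μ hμ
    rw [mem_spectrum_iff_det, mem_spectrum_iff_det]
    exact hdet μ hμ
  -- union with zero
  have himg : (fun z : ℂ => ‖z‖) '' spectrum ℂ A ∪ {0}
      = (fun z : ℂ => ‖z‖) '' spectrum ℂ B ∪ {0} := by
    ext x
    simp only [Set.mem_union, Set.mem_image, Set.mem_singleton_iff]
    constructor
    · rintro (⟨μ, hμ, rfl⟩ | hx)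
      · by_cases hz : μ = 0
        · right; simp [hz]
        · exact Or.inl ⟨μ, (hspec μ hz).mp hμ, rfl⟩
      · exact Or.inr hx
    · rintro (⟨μ, hμ, rfl⟩ | hx)
      · by_cases hz : μ = 0
        · right; simp [hz]
        · exact Or.inl ⟨μ, (hspec μ hz).mpr hμ, rfl⟩
      · exact Or.inr hx
  -- nonempty spectra
  haveI : Nonempty (Fin k) := ⟨⟨0, hk⟩⟩
  haveI : Nonempty (Fin n) := ⟨e ⟨0, hk⟩⟩
  have hAne : (spectrum ℂ A).Nonempty :=
    spectrum.nonempty_of_isAlgClosed_of_finiteDimensional ℂ A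
  have hBne : (spectrum ℂ B).Nonempty :=
    spectrum.nonempty_of_isAlgClosed_of_finiteDimensional ℂ B
  have key : sSup ((fun z : ℂ => ‖z‖) '' spectrum ℂ A)
      = sSup ((fun z : ℂ => ‖z‖) '' spectrum ℂ B) := by
    apply sSup_eq_of_union_zero
    · exact (Matrix.finite_spectrum A).image _
    · exact (Matrix.finite_spectrum B).image _
    · exact hAne.image _
    · exact hBne.image _
    · rintro x ⟨μ, -, rfl⟩; exact norm_nonneg _
    · rintro x ⟨μ, -, rfl⟩; exact norm_nonneg _
    · exact himg
  simpa [eRad, specRad, hAdef, hBdef] using key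

/-- Spectral radius of a `1 × 1` matrix with nonnegative entry. -/
lemma specRad_fin_one (M : Matrix (Fin 1) (Fin 1) ℝ) (hM : 0 ≤ M 0 0) :
    specRad M = M 0 0 := by
  have hspec : spectrum ℂ (M.map (Complex.ofReal : ℝ → ℂ)) = {(M 0 0 : ℂ)} := by
    ext μ
    rw [mem_spectrum_iff_det, Matrix.det_fin_one]
    simp only [Matrix.sub_apply, Matrix.smul_apply, Matrix.one_apply_eq, Matrix.map_apply,
      smul_eq_mul, mul_one, Set.mem_singleton_iff, sub_eq_zero]
  rw [specRad, hspec, Set.image_singleton, csSup_singleton]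
  simp [Complex.norm_real, abs_of_nonneg hM]

/-- Spectral radius of a symmetric nonnegative `2 × 2` matrix. -/
lemma specRad_fin_two (M : Matrix (Fin 2) (Fin 2) ℝ)
    (hsymm : M 1 0 = M 0 1) (ha : 0 ≤ M 0 0) (hb : 0 ≤ M 1 1) (hc : 0 ≤ M 0 1) :
    specRad M = (M 0 0 + M 1 1
      + Real.sqrt ((M 0 0 - M 1 1) ^ 2 + 4 * M 0 1 ^ 2)) / 2 := by
  set a := M 0 0
  set b := M 1 1
  set c := M 0 1
  set s := Real.sqrt ((a - b) ^ 2 + 4 * c ^ 2) with hs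
  have hs0 : 0 ≤ s := Real.sqrt_nonneg _
  have hssq : s ^ 2 = (a - b) ^ 2 + 4 * c ^ 2 := Real.sq_sqrt (by positivity)
  set r1 := (a + b - s) / 2 with hr1
  set r2 := (a + b + s) / 2 with hr2
  have hfact : ∀ μ : ℂ, (μ - (a : ℂ)) * (μ - (b : ℂ)) - (c : ℂ) * (c : ℂ)
      = (μ - (r1 : ℝ)) * (μ - (r2 : ℝ)) := by
    intro μ
    have h1 : (r1 : ℂ) + (r2 : ℂ) = (a : ℂ) + (b : ℂ) := by
      push_cast [hr1, hr2]; ring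
    have h2 : (r1 : ℂ) * (r2 : ℂ) = (a : ℂ) * (b : ℂ) - (c : ℂ) * (c : ℂ) := by
      have : r1 * r2 = a * b - c * c := by
        rw [hr1, hr2]
        have : (a + b - s) / 2 * ((a + b + s) / 2) = ((a + b) ^ 2 - s ^ 2) / 4 := by ring
        rw [this, hssq]; ring
      exact_mod_cast congrArg (Complex.ofReal) this
    have expand : (μ - (r1 : ℝ)) * (μ - (r2 : ℝ))
        = μ * μ - ((r1 : ℂ) + (r2 : ℂ)) * μ + (r1 : ℂ) * (r2 : ℂ) := by ring
    rw [expand, h1, h2]; ring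
  have hspec : spectrum ℂ (M.map (Complex.ofReal : ℝ → ℂ)) = {(r1 : ℂ), (r2 : ℂ)} := by
    ext μ
    rw [mem_spectrum_iff_det, Matrix.det_fin_two]
    have e00 : (μ • (1 : Matrix (Fin 2) (Fin 2) ℂ)
        - M.map (Complex.ofReal : ℝ → ℂ)) 0 0 = μ - (a : ℂ) := by
      simp [Matrix.sub_apply, Matrix.smul_apply, Matrix.one_apply, Matrix.map_apply]; rfl
    have e11 : (μ • (1 : Matrix (Fin 2) (Fin 2) ℂ)
        - M.map (Complex.ofReal : ℝ → ℂ)) 1 1 = μ - (b : ℂ) := by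
      simp [Matrix.sub_apply, Matrix.smul_apply, Matrix.one_apply, Matrix.map_apply]; rfl
    have e01 : (μ • (1 : Matrix (Fin 2) (Fin 2) ℂ)
        - M.map (Complex.ofReal : ℝ → ℂ)) 0 1 = -(c : ℂ) := by
      simp [Matrix.sub_apply, Matrix.smul_apply, Matrix.one_apply, Matrix.map_apply]; rfl
    have e10 : (μ • (1 : Matrix (Fin 2) (Fin 2) ℂ)
        - M.map (Complex.ofReal : ℝ → ℂ)) 1 0 = -(c : ℂ) := by
      simp [Matrix.sub_apply, Matrix.smul_apply, Matrix.one_apply, Matrix.map_apply, hsymm]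
    rw [e00, e11, e01, e10]
    have : (μ - (a : ℂ)) * (μ - (b : ℂ)) - -(c : ℂ) * -(c : ℂ)
        = (μ - (r1 : ℝ)) * (μ - (r2 : ℝ)) := by
      rw [← hfact μ]; ring
    rw [this, mul_eq_zero, sub_eq_zero, sub_eq_zero]
    simp [Set.mem_insert_iff, Set.mem_singleton_iff]
  rw [specRad, hspec]
  have himg : (fun z : ℂ => ‖z‖) '' {(r1 : ℂ), (r2 : ℂ)} = {|r1|, |r2|} := by
    rw [Set.image_pair]
    simp [Complex.norm_real]
  rw [himg, csSup_pair]
  have hr2nn : 0 ≤ r2 := by rw [hr2]; positivity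
  have hr1le : |r1| ≤ r2 := by
    rw [abs_le]
    constructor
    · rw [hr1, hr2]; nlinarith
    · rw [hr1, hr2]; nlinarith
  rw [abs_of_nonneg hr2nn]
  rw [sup_eq_right.mpr hr1le, hr2]

theorem same_eRad_symm_implies_eq {n : ℕ} (K Kt : Matrix (Fin n) (Fin n) ℝ)
    (hK : ∀ i j, 0 ≤ K i j) (hKt : ∀ i j, 0 ≤ Kt i j)
    (hKs : K.IsSymm) (hKts : Kt.IsSymm)
    (h : ∀ η : Fin n → ℝ, (∀ i, 0 ≤ η i) → eRad K η = eRad Kt η) :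
    Kt = K := by
  classical
  -- diagonal entries agree
  have hdiag : ∀ i : Fin n, Kt i i = K i i := by
    intro i
    set e : Fin 1 → Fin n := fun _ => i with he
    have hei : Function.Injective e := fun a b _ => Subsingleton.elim a b
    have hη : ∀ a, (0 : ℝ) ≤ (if a ∈ Finset.image e Finset.univ then (1:ℝ) else 0) := by
      intro a; split <;> norm_num
    have h1 := h _ hη
    rw [eRad_indicator K e hei (by norm_num), eRad_indicator Kt e hei (by norm_num)] at h1
    rw [specRad_fin_one _ (by simp [Matrix.submatrix_apply, he, hK]),
      specRad_fin_one _ (by simp [Matrix.submatrix_apply, he, hKt])] at h1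
    simpa [Matrix.submatrix_apply, he] using h1.symm
  -- off-diagonal entries agree
  have hoff : ∀ i j : Fin n, i ≠ j → Kt i j = K i j := by
    intro i j hij
    set e : Fin 2 → Fin n := ![i, j] with he
    have hei : Function.Injective e := by
      intro a b hab
      fin_cases a <;> fin_cases b <;>
        simp only [he, Matrix.cons_val_zero, Matrix.cons_val_one, Matrix.head_cons] at hab ⊢ <;>
        first | rfl | exact absurd hab hij | exact absurd hab.symm hij
    have hη : ∀ a, (0 : ℝ) ≤ (if a ∈ Finset.image e Finset.univ then (1:ℝ) else 0) := by
      intro a; split <;> norm_num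
    have h1 := h _ hη
    rw [eRad_indicator K e hei (by norm_num), eRad_indicator Kt e hei (by norm_num)] at h1
    have hsK : (K.submatrix e e) 1 0 = (K.submatrix e e) 0 1 := by
      simp [Matrix.submatrix_apply, he, hKs.apply]
    have hsKt : (Kt.submatrix e e) 1 0 = (Kt.submatrix e e) 0 1 := by
      simp [Matrix.submatrix_apply, he, hKts.apply]
    rw [specRad_fin_two _ hsK (by simp [Matrix.submatrix_apply, he, hK])
        (by simp [Matrix.submatrix_apply, he, hK]) (by simp [Matrix.submatrix_apply, he, hK]),
      specRad_fin_two _ hsKt (by simp [Matrix.submatrix_apply, he, hKt])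
        (by simp [Matrix.submatrix_apply, he, hKt])
        (by simp [Matrix.submatrix_apply, he, hKt])] at h1
    simp only [Matrix.submatrix_apply, he] at h1
    simp only [Matrix.cons_val_zero, Matrix.cons_val_one, Matrix.head_cons] at h1
    rw [hdiag i, hdiag j] at h1
    have hsqrt : Real.sqrt ((K i i - K j j) ^ 2 + 4 * K i j ^ 2)
        = Real.sqrt ((K i i - K j j) ^ 2 + 4 * Kt i j ^ 2) := by linarith
    have hsq : (K i i - K j j) ^ 2 + 4 * K i j ^ 2
        = (K i i - K j j) ^ 2 + 4 * Kt i j ^ 2 :=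
      (Real.sqrt_inj (by positivity) (by positivity)).mp hsqrt
    have : K i j ^ 2 = Kt i j ^ 2 := by linarith
    nlinarith [hK i j, hKt i j]
  ext i j
  by_cases hij : i = j
  · subst hij; exact hdiag i
  · exact hoff i j hij
end

section
/- Let n = m + p with m, p ≥ 1, let A be an m×m real matrix, B a p×p real matrix, v, w ∈ ℝᵐ, and b, c ∈ ℝᵖ. Let K be the n×n block matrix [[A, v·bᵀ],[c·wᵀ, B]] and let K̃ be the n×n block matrix [[Aᵀ, w·bᵀ],[c·vᵀ, B]] (a partial transpose of K). Then R_e[K](η) = R_e[K̃](η) for all η ∈ ℝ₊ⁿ. -/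
open Matrix

section Aux

open Polynomial

set_option linter.unusedSectionVars false

variable {ι κ : Type*} [Fintype ι] [DecidableEq ι] [Fintype κ] [DecidableEq κ]

lemma eval_charpoly' (M : Matrix ι ι ℂ) (μ : ℂ) :
    M.charpoly.eval μ = (μ • (1 : Matrix ι ι ℂ) - M).det := by
  rw [Matrix.charpoly, ← Polynomial.coe_evalRingHom, RingHom.map_det]
  congr 1
  ext i j
  by_cases h : i = j <;>
    simp [h, charmatrix_apply, Matrix.diagonal_apply, Matrix.one_apply, Matrix.smul_apply]

lemma spectrum_eq_of_charpoly_eq (M N : Matrix ι ι ℂ) (h : M.charpoly = N.charpoly) :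
    spectrum ℂ M = spectrum ℂ N := by
  ext μ
  simp only [spectrum.mem_iff, Matrix.isUnit_iff_isUnit_det, isUnit_iff_ne_zero,
    Algebra.algebraMap_eq_smul_one, ← eval_charpoly', h]

lemma vecMulVec_sandwich (c : κ → ℂ) (w : ι → ℂ) (N : Matrix ι ι ℂ) (v : ι → ℂ) (b : κ → ℂ) :
    vecMulVec c w * N * vecMulVec v b = (w ⬝ᵥ N *ᵥ v) • vecMulVec c b := by
  ext i j
  simp only [Matrix.mul_apply, vecMulVec_apply, Matrix.smul_apply, smul_eq_mul, dotProduct,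
    mulVec, Finset.sum_mul, Finset.mul_sum]
  rw [Finset.sum_comm]
  apply Finset.sum_congr rfl; intro k _
  apply Finset.sum_congr rfl; intro l _
  ring

lemma vecMulVec_mul_diagonal (x : ι → ℂ) (y : κ → ℂ) (d : κ → ℂ) :
    vecMulVec x y * diagonal d = vecMulVec x (fun j => y j * d j) := by
  ext i j
  simp [Matrix.mul_diagonal, vecMulVec_apply, mul_assoc]

lemma det_smul_one_sub_mul_comm {μ : ℂ} (hμ : μ ≠ 0) (M N : Matrix ι ι ℂ) :
    (μ • 1 - M * N).det = (μ • 1 - N * M).det := by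
  have h1 : μ • (1 : Matrix ι ι ℂ) - M * N = μ • (1 - (μ⁻¹ • M) * N) := by
    rw [smul_sub, smul_mul_assoc, smul_smul, mul_inv_cancel₀ hμ, one_smul]
  have h2 : μ • (1 : Matrix ι ι ℂ) - N * M = μ • (1 - N * (μ⁻¹ • M)) := by
    rw [smul_sub, mul_smul_comm, smul_smul, mul_inv_cancel₀ hμ, one_smul]
  rw [h1, h2, Matrix.det_smul, Matrix.det_smul, det_one_sub_mul_comm]

lemma dot_transpose (N : Matrix ι ι ℂ) (u z : ι → ℂ) : u ⬝ᵥ Nᵀ *ᵥ z = z ⬝ᵥ N *ᵥ u := by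
  simp only [dotProduct, mulVec, dotProduct, transpose_apply, Finset.mul_sum]
  rw [Finset.sum_comm]
  exact Finset.sum_congr rfl fun i _ => Finset.sum_congr rfl fun j _ => by ring

lemma key_det (A : Matrix ι ι ℂ) (B : Matrix κ κ ℂ) (v w : ι → ℂ) (b c : κ → ℂ)
    (d₁ : ι → ℂ) (d₂ : κ → ℂ) {μ : ℂ} (hμ : μ ≠ 0)
    (hX : IsUnit (μ • (1 : Matrix ι ι ℂ) - A * diagonal d₁).det)
    (hX' : IsUnit (μ • (1 : Matrix ι ι ℂ) - Aᵀ * diagonal d₁).det) :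
    (μ • 1 - fromBlocks (A * diagonal d₁) (vecMulVec v b * diagonal d₂)
        (vecMulVec c w * diagonal d₁) (B * diagonal d₂)).det
      = (μ • 1 - fromBlocks (Aᵀ * diagonal d₁) (vecMulVec w b * diagonal d₂)
        (vecMulVec c v * diagonal d₁) (B * diagonal d₂)).det := by
  set Δ := diagonal d₁ with hΔ
  set X := μ • (1 : Matrix ι ι ℂ) - A * Δ with hXdef
  set Xt := μ • (1 : Matrix ι ι ℂ) - Aᵀ * Δ with hXtdef
  have hsplit : ∀ (P : Matrix ι ι ℂ) (Q : Matrix ι κ ℂ) (R : Matrix κ ι ℂ) (S : Matrix κ κ ℂ),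
      μ • (1 : Matrix (ι ⊕ κ) (ι ⊕ κ) ℂ) - fromBlocks P Q R S =
        fromBlocks (μ • 1 - P) (-Q) (-R) (μ • 1 - S) := by
    intro P Q R S
    rw [← fromBlocks_one, fromBlocks_smul, sub_eq_add_neg, fromBlocks_neg, fromBlocks_add]
    simp [sub_eq_add_neg]
  rw [hsplit, hsplit]
  haveI : Invertible X := X.invertibleOfIsUnitDet hX
  haveI : Invertible Xt := Xt.invertibleOfIsUnitDet hX'
  have hdetXt' : IsUnit (Xtᵀ).det := by rwa [det_transpose]
  have hdet : X.det = Xt.det := by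
    have h0 : Xt = (μ • (1 : Matrix ι ι ℂ) - Δ * A)ᵀ := by
      rw [transpose_sub, transpose_smul, transpose_one, transpose_mul, hΔ, diagonal_transpose]
    rw [h0, det_transpose, hXdef, hΔ, det_smul_one_sub_mul_comm hμ]
  have hcomm : Δ * X = Xtᵀ * Δ := by
    rw [hXdef, hXtdef, transpose_sub, transpose_smul, transpose_one, transpose_mul,
      transpose_transpose, hΔ, diagonal_transpose, Matrix.mul_sub, Matrix.sub_mul,
      mul_smul_comm, smul_mul_assoc, Matrix.mul_one, Matrix.one_mul, Matrix.mul_assoc]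
  have hΔXinv : Δ * X⁻¹ = (Xtᵀ)⁻¹ * Δ := by
    calc Δ * X⁻¹ = (Xtᵀ)⁻¹ * (Xtᵀ * (Δ * X⁻¹)) := by
          rw [← Matrix.mul_assoc, nonsing_inv_mul _ hdetXt', Matrix.one_mul]
      _ = (Xtᵀ)⁻¹ * ((Δ * X) * X⁻¹) := by rw [← Matrix.mul_assoc Xtᵀ Δ X⁻¹, ← hcomm]
      _ = (Xtᵀ)⁻¹ * Δ := by
          rw [Matrix.mul_assoc, mul_nonsing_inv _ hX, Matrix.mul_one]
  have hΔsymm : Δ = Δᵀ := by rw [hΔ, diagonal_transpose]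
  have hscal : (fun i => w i * d₁ i) ⬝ᵥ X⁻¹ *ᵥ v = (fun i => v i * d₁ i) ⬝ᵥ Xt⁻¹ *ᵥ w := by
    have hw : (fun i => w i * d₁ i) = Δ *ᵥ w := by
      funext i; simp [hΔ, mulVec_diagonal, mul_comm]
    have hv : (fun i => v i * d₁ i) = Δ *ᵥ v := by
      funext i; simp [hΔ, mulVec_diagonal, mul_comm]
    rw [hw, hv]
    calc (Δ *ᵥ w) ⬝ᵥ X⁻¹ *ᵥ v = w ⬝ᵥ Δ *ᵥ (X⁻¹ *ᵥ v) := by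
          rw [dotProduct_comm]
          nth_rewrite 1 [hΔsymm]
          exact dot_transpose Δ (X⁻¹ *ᵥ v) w
      _ = w ⬝ᵥ (Xtᵀ)⁻¹ *ᵥ (Δ *ᵥ v) := by
          rw [mulVec_mulVec, hΔXinv, ← mulVec_mulVec]
      _ = (Δ *ᵥ v) ⬝ᵥ Xt⁻¹ *ᵥ w := by
          rw [← transpose_nonsing_inv]
          exact dot_transpose Xt⁻¹ w (Δ *ᵥ v)
  rw [det_fromBlocks₁₁, det_fromBlocks₁₁]
  simp only [Matrix.neg_mul, Matrix.mul_neg, neg_neg, invOf_eq_nonsing_inv]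
  rw [hΔ, vecMulVec_mul_diagonal, vecMulVec_mul_diagonal, vecMulVec_mul_diagonal,
    vecMulVec_mul_diagonal, vecMulVec_sandwich, vecMulVec_sandwich, hdet, hscal]

lemma charpoly_key (A : Matrix ι ι ℂ) (B : Matrix κ κ ℂ) (v w : ι → ℂ) (b c : κ → ℂ)
    (d₁ : ι → ℂ) (d₂ : κ → ℂ) :
    (fromBlocks (A * diagonal d₁) (vecMulVec v b * diagonal d₂)
        (vecMulVec c w * diagonal d₁) (B * diagonal d₂)).charpoly
      = (fromBlocks (Aᵀ * diagonal d₁) (vecMulVec w b * diagonal d₂)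
        (vecMulVec c v * diagonal d₁) (B * diagonal d₂)).charpoly := by
  apply Polynomial.eq_of_infinite_eval_eq
  have hbad : ({(0 : ℂ)} ∪ {x | (A * diagonal d₁).charpoly.IsRoot x}
      ∪ {x | (Aᵀ * diagonal d₁).charpoly.IsRoot x}).Finite :=
    (((Set.finite_singleton 0).union
      (Polynomial.finite_setOf_isRoot (Matrix.charpoly_monic _).ne_zero)).union
      (Polynomial.finite_setOf_isRoot (Matrix.charpoly_monic _).ne_zero))
  apply Set.Infinite.mono ?_ hbad.infinite_compl
  intro μ hμ
  simp only [Set.mem_compl_iff, Set.mem_union, Set.mem_singleton_iff, Set.mem_setOf_eq,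
    not_or, Polynomial.IsRoot] at hμ
  obtain ⟨⟨h0, h1⟩, h2⟩ := hμ
  have hX : IsUnit (μ • (1 : Matrix ι ι ℂ) - A * diagonal d₁).det := by
    rw [isUnit_iff_ne_zero, ← eval_charpoly']; exact h1
  have hX' : IsUnit (μ • (1 : Matrix ι ι ℂ) - Aᵀ * diagonal d₁).det := by
    rw [isUnit_iff_ne_zero, ← eval_charpoly']; exact h2
  show Polynomial.eval μ _ = Polynomial.eval μ _
  rw [eval_charpoly', eval_charpoly']
  exact key_det A B v w b c d₁ d₂ h0 hX hX'

end Aux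

theorem eRad_partial_transpose {m p : ℕ} (hm : 1 ≤ m) (hp : 1 ≤ p)
    (A : Matrix (Fin m) (Fin m) ℝ) (B : Matrix (Fin p) (Fin p) ℝ)
    (v w : Fin m → ℝ) (b c : Fin p → ℝ) :
    ∀ η : Fin m ⊕ Fin p → ℝ, (∀ i, 0 ≤ η i) →
      eRad (Matrix.fromBlocks A (Matrix.vecMulVec v b) (Matrix.vecMulVec c w) B) η =
        eRad (Matrix.fromBlocks Aᵀ (Matrix.vecMulVec w b) (Matrix.vecMulVec c v) B) η := by
  intro η _
  have hmm : ∀ (A' : Matrix (Fin m) (Fin m) ℝ) (v' w' : Fin m → ℝ) (b' c' : Fin p → ℝ),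
      ((Matrix.fromBlocks A' (Matrix.vecMulVec v' b') (Matrix.vecMulVec c' w') B) *
          Matrix.diagonal η).map (Complex.ofReal : ℝ → ℂ)
        = fromBlocks
            (A'.map Complex.ofReal * diagonal (fun i => (η (Sum.inl i) : ℂ)))
            (vecMulVec (fun i => (v' i : ℂ)) (fun j => (b' j : ℂ)) *
              diagonal (fun j => (η (Sum.inr j) : ℂ)))
            (vecMulVec (fun j => (c' j : ℂ)) (fun i => (w' i : ℂ)) *
              diagonal (fun i => (η (Sum.inl i) : ℂ)))
            (B.map Complex.ofReal * diagonal (fun j => (η (Sum.inr j) : ℂ))) := by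
    intro A' v' w' b' c'
    ext i j
    cases i <;> cases j <;>
      simp [Matrix.map_apply, Matrix.mul_diagonal, Matrix.fromBlocks_apply₁₁,
        Matrix.fromBlocks_apply₁₂, Matrix.fromBlocks_apply₂₁, Matrix.fromBlocks_apply₂₂,
        Matrix.vecMulVec_apply, Complex.ofReal_mul, mul_assoc]
  have hspec : spectrum ℂ
      (((Matrix.fromBlocks A (Matrix.vecMulVec v b) (Matrix.vecMulVec c w) B) *
        Matrix.diagonal η).map (Complex.ofReal : ℝ → ℂ))
      = spectrum ℂ
      (((Matrix.fromBlocks Aᵀ (Matrix.vecMulVec w b) (Matrix.vecMulVec c v) B) *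
        Matrix.diagonal η).map (Complex.ofReal : ℝ → ℂ)) := by
    rw [hmm A v w b c, hmm Aᵀ w v b c]
    have ht : (Aᵀ).map (Complex.ofReal : ℝ → ℂ) = (A.map Complex.ofReal)ᵀ :=
      Matrix.transpose_map
    rw [ht]
    exact spectrum_eq_of_charpoly_eq _ _
      (charpoly_key (A.map Complex.ofReal) (B.map Complex.ofReal)
        (fun i => (v i : ℂ)) (fun i => (w i : ℂ)) (fun j => (b j : ℂ)) (fun j => (c j : ℂ))
        (fun i => (η (Sum.inl i) : ℂ)) (fun j => (η (Sum.inr j) : ℂ)))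
  simp only [eRad, specRad, hspec]
end
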